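/- arXiv:1309.6522 — 2 statements merged into one kernel-verified Lean document; each statement's English description precedes it below -/
import Mathlib

section
/- (Level bound / property (4) of perfectness) For any A ∈ B^{i,ℓ} of type A_n^{(1)}, Σ_{j=0}^{n} ε_j(A) ≥ ℓ, where ε₀(A) = ℓ - Σ_{j=i}^{n} a_{1,j} - Σ_{j=2}^{n} a_{j,n} and ε_l for l = 1,…,n are the classical statistics of the polytope model. -/
open Finset

/-- Matrices of the polytope model: entry `a p q` for row `p`, column `q`. -/
abbrev Mat := ℕ → ℕ → ℕ

/-- A monotone lattice path `β(1) = (1,i), …, β(n) = (i,n)`: each step increases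
the row or the column index by 1. -/
def IsPath (n i : ℕ) (β : ℕ → ℕ × ℕ) : Prop :=
  β 1 = (1, i) ∧ β n = (i, n) ∧
    ∀ s, 1 ≤ s → s < n →
      β (s + 1) = ((β s).1 + 1, (β s).2) ∨ β (s + 1) = ((β s).1, (β s).2 + 1)

/-- Membership in the Kirillov–Reshetikhin polytope `B^{i,m}` of type `A_n^{(1)}`:
non-negative integer matrices indexed by `1 ≤ p ≤ i`, `i ≤ q ≤ n` (zero outside),
all of whose monotone lattice-path sums are at most `m`. -/
def MemKR (n i m : ℕ) (a : Mat) : Prop :=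
  (∀ p q, ¬(1 ≤ p ∧ p ≤ i ∧ i ≤ q ∧ q ≤ n) → a p q = 0) ∧
  ∀ β : ℕ → ℕ × ℕ, IsPath n i β → ∑ s ∈ Icc 1 n, a (β s).1 (β s).2 ≤ m

/-- The set of maximizers of `F` on `S`. -/
def maximizers (S : Finset ℕ) (F : ℕ → ℕ) : Finset ℕ :=
  S.filter fun q => ∀ q' ∈ S, F q' ≤ F q

/-- Smallest maximizer. -/
def argmaxLow (S : Finset ℕ) (F : ℕ → ℕ) : ℕ := WithTop.untopD 0 (maximizers S F).min

/-- Largest maximizer. -/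
def argmaxHigh (S : Finset ℕ) (F : ℕ → ℕ) : ℕ := WithBot.unbotD 0 (maximizers S F).max

/-- For `l > i`: `G(q) = Σ_{j=1}^q a_{j,l-1} + Σ_{j=q}^i a_{j,l}`. -/
def Gplus (i : ℕ) (a : Mat) (l q : ℕ) : ℕ :=
  ∑ j ∈ Icc 1 q, a j (l - 1) + ∑ j ∈ Icc q i, a j l

/-- For `l < i`: `F(q) = Σ_{j=i}^q a_{l,j} + Σ_{j=q}^n a_{l+1,j}`. -/
def Fminus (n i : ℕ) (a : Mat) (l q : ℕ) : ℕ :=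
  ∑ j ∈ Icc i q, a l j + ∑ j ∈ Icc q n, a (l + 1) j

def pPlus (i : ℕ) (a : Mat) (l : ℕ) : ℕ := argmaxLow (Icc 1 i) (Gplus i a l)
def qPlus (i : ℕ) (a : Mat) (l : ℕ) : ℕ := argmaxHigh (Icc 1 i) (Gplus i a l)
def pMinus (n i : ℕ) (a : Mat) (l : ℕ) : ℕ := argmaxHigh (Icc i n) (Fminus n i a l)
def qMinus (n i : ℕ) (a : Mat) (l : ℕ) : ℕ := argmaxLow (Icc i n) (Fminus n i a l)

/-- The statistic `φ_l` of the polytope model (`l = 0` is the affine one). -/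
def phi (n i m : ℕ) (a : Mat) (l : ℕ) : ℤ :=
  if l = 0 then (a 1 n : ℤ)
  else if l = i then
    (m : ℤ) - ∑ j ∈ Icc 1 (i - 1), (a j i : ℤ) - ∑ j ∈ Icc i n, (a i j : ℤ)
  else if i < l then
    ∑ j ∈ Icc 1 (pPlus i a l), (a j (l - 1) : ℤ)
      - ∑ j ∈ Icc 1 (pPlus i a l - 1), (a j l : ℤ)
  else
    ∑ j ∈ Icc (pMinus n i a l) n, (a (l + 1) j : ℤ)
      - ∑ j ∈ Icc (pMinus n i a l + 1) n, (a l j : ℤ)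

/-- The statistic `ε_l` of the polytope model (`l = 0` is the affine one). -/
def eps (n i m : ℕ) (a : Mat) (l : ℕ) : ℤ :=
  if l = 0 then
    (m : ℤ) - ∑ j ∈ Icc i n, (a 1 j : ℤ) - ∑ j ∈ Icc 2 n, (a j n : ℤ)
  else if l = i then (a i i : ℤ)
  else if i < l then
    ∑ j ∈ Icc (qPlus i a l) i, (a j l : ℤ)
      - ∑ j ∈ Icc (qPlus i a l + 1) i, (a j (l - 1) : ℤ)
  else
    ∑ j ∈ Icc i (qMinus n i a l), (a l j : ℤ)
      - ∑ j ∈ Icc i (qMinus n i a l - 1), (a (l + 1) j : ℤ)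

/-- Update one entry of a matrix. -/
def upd (a : Mat) (p q v : ℕ) : Mat :=
  fun p' q' => if p' = p ∧ q' = q then v else a p' q'

/-- The Kashiwara raising operator `ẽ_l` on `B^{i,m}` (`l = 0` affine). -/
def eOp (n i m : ℕ) (a : Mat) (l : ℕ) : Option Mat :=
  if eps n i m a l ≤ 0 then none
  else some (
    if l = 0 then upd a 1 n (a 1 n + 1)
    else if l = i then upd a i i (a i i - 1)
    else if i < l then
      upd (upd a (qPlus i a l) (l - 1) (a (qPlus i a l) (l - 1) + 1))
        (qPlus i a l) l (a (qPlus i a l) l - 1)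
    else
      upd (upd a l (qMinus n i a l) (a l (qMinus n i a l) - 1))
        (l + 1) (qMinus n i a l) (a (l + 1) (qMinus n i a l) + 1))

/-- The Kashiwara lowering operator `f̃_l` on `B^{i,m}` (`l = 0` affine). -/
def fOp (n i m : ℕ) (a : Mat) (l : ℕ) : Option Mat :=
  if phi n i m a l ≤ 0 then none
  else some (
    if l = 0 then upd a 1 n (a 1 n - 1)
    else if l = i then upd a i i (a i i + 1)
    else if i < l then
      upd (upd a (pPlus i a l) (l - 1) (a (pPlus i a l) (l - 1) - 1))
        (pPlus i a l) l (a (pPlus i a l) l + 1)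
    else
      upd (upd a l (pMinus n i a l) (a l (pMinus n i a l) + 1))
        (l + 1) (pMinus n i a l) (a (l + 1) (pMinus n i a l) - 1))

/-- `ẽ_l` on the tensor product `B^{r₁,s₁} ⊗ B^{r₂,s₂}`. -/
def eTen (n r₁ s₁ r₂ s₂ l : ℕ) (x : Mat × Mat) : Option (Mat × Mat) :=
  if phi n r₂ s₂ x.2 l < eps n r₁ s₁ x.1 l then
    (eOp n r₁ s₁ x.1 l).map fun a' => (a', x.2)
  else (eOp n r₂ s₂ x.2 l).map fun b' => (x.1, b')

/-- `f̃_l` on the tensor product `B^{r₁,s₁} ⊗ B^{r₂,s₂}`. -/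
def fTen (n r₁ s₁ r₂ s₂ l : ℕ) (x : Mat × Mat) : Option (Mat × Mat) :=
  if phi n r₂ s₂ x.2 l ≤ eps n r₁ s₁ x.1 l then
    (fOp n r₁ s₁ x.1 l).map fun a' => (a', x.2)
  else (fOp n r₂ s₂ x.2 l).map fun b' => (x.1, b')

/-- Classical highest weight element of the tensor product. -/
def IsHW (n r₁ s₁ r₂ s₂ : ℕ) (x : Mat × Mat) : Prop :=
  ∀ l, 1 ≤ l → l ≤ n → eTen n r₁ s₁ r₂ s₂ l x = none

/-- Cartan matrix of type `A_n`: `⟨α_r, α_j^∨⟩`. -/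
def cartan (r j : ℕ) : ℤ :=
  if r = j then 2 else if r + 1 = j ∨ j + 1 = r then -1 else 0

/-- The pairing `⟨wt(A), α_j^∨⟩` where `wt(A) = m ω_i - Σ a_{p,q} α_{p,q}`,
and `α_{p,q} = α_p + ⋯ + α_q`. -/
def wtCoord (n i m : ℕ) (a : Mat) (j : ℕ) : ℤ :=
  (if j = i then (m : ℤ) else 0)
    - ∑ p ∈ Icc 1 i, ∑ q ∈ Icc i n, (a p q : ℤ) * ∑ r ∈ Icc p q, cartan r j

/-- The matrix `b^Λ` with `(p,q)`-entry `c ((p+q) mod (n+1))` on the index range. -/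
def bOf (n i : ℕ) (c : ℕ → ℕ) : Mat :=
  fun p q => if 1 ≤ p ∧ p ≤ i ∧ i ≤ q ∧ q ≤ n then c ((p + q) % (n + 1)) else 0

section Aux

lemma argmaxHigh_spec (S : Finset ℕ) (F : ℕ → ℕ) (hS : S.Nonempty) :
    argmaxHigh S F ∈ S ∧ ∀ q ∈ S, F q ≤ F (argmaxHigh S F) := by
  obtain ⟨m, hmS, hm⟩ := S.exists_max_image F hS
  have hne : (maximizers S F).Nonempty := ⟨m, by
    simp only [maximizers, Finset.mem_filter]; exact ⟨hmS, hm⟩⟩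
  obtain ⟨M, hM⟩ := Finset.max_of_nonempty hne
  have hMm : M ∈ maximizers S F := Finset.mem_of_max hM
  have : argmaxHigh S F = M := by rw [argmaxHigh, hM]; rfl
  rw [this]
  simpa [maximizers, Finset.mem_filter] using hMm

lemma argmaxLow_spec (S : Finset ℕ) (F : ℕ → ℕ) (hS : S.Nonempty) :
    argmaxLow S F ∈ S ∧ ∀ q ∈ S, F q ≤ F (argmaxLow S F) := by
  obtain ⟨m, hmS, hm⟩ := S.exists_max_image F hS
  have hne : (maximizers S F).Nonempty := ⟨m, by
    simp only [maximizers, Finset.mem_filter]; exact ⟨hmS, hm⟩⟩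
  obtain ⟨M, hM⟩ := Finset.min_of_nonempty hne
  have hMm : M ∈ maximizers S F := Finset.mem_of_min hM
  have : argmaxLow S F = M := by rw [argmaxLow, hM]; rfl
  rw [this]
  simpa [maximizers, Finset.mem_filter] using hMm

lemma eps_gt (n i ℓ : ℕ) (a : Mat) (hi1 : 1 ≤ i) (l : ℕ) (hl : i < l) :
    (a i l : ℤ) ≤ eps n i ℓ a l := by
  have hl0 : l ≠ 0 := by omega
  have hli : l ≠ i := by omega
  obtain ⟨hqmem, hqmax⟩ := argmaxHigh_spec (Icc 1 i) (Gplus i a l)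
    ⟨1, by simp [hi1]⟩
  set q := qPlus i a l with hqdef
  have hqq : argmaxHigh (Icc 1 i) (Gplus i a l) = q := rfl
  rw [hqq] at hqmem hqmax
  obtain ⟨hq1, hqi⟩ := Finset.mem_Icc.mp hqmem
  have hG := hqmax i (Finset.mem_Icc.mpr ⟨hi1, le_refl i⟩)
  unfold Gplus at hG
  have hGz : (∑ j ∈ Icc 1 i, (a j (l-1) : ℤ)) + ∑ j ∈ Icc i i, (a j l : ℤ)
      ≤ (∑ j ∈ Icc 1 q, (a j (l-1) : ℤ)) + ∑ j ∈ Icc q i, (a j l : ℤ) := by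
    exact_mod_cast hG
  rw [Finset.Icc_self, Finset.sum_singleton] at hGz
  have hsplit : (∑ j ∈ Icc 1 q, (a j (l-1) : ℤ)) + ∑ j ∈ Icc (q+1) i, (a j (l-1) : ℤ)
      = ∑ j ∈ Icc 1 i, (a j (l-1) : ℤ) := by
    rw [show Icc 1 q = Ico 1 (q+1) from (Finset.Ico_add_one_right_eq_Icc 1 q).symm,
        show Icc (q+1) i = Ico (q+1) (i+1) from (Finset.Ico_add_one_right_eq_Icc _ _).symm,
        show Icc 1 i = Ico 1 (i+1) from (Finset.Ico_add_one_right_eq_Icc _ _).symm]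
    exact Finset.sum_Ico_consecutive _ (by omega) (by omega)
  rw [eps, if_neg hl0, if_neg hli, if_pos hl]
  linarith

lemma eps_lt (n i ℓ : ℕ) (a : Mat) (hin : i ≤ n) (l : ℕ) (hl1 : 1 ≤ l) (hl : l < i) :
    (∑ j ∈ Icc i n, (a l j : ℤ)) - (∑ j ∈ Icc i n, (a (l+1) j : ℤ)) + (a (l+1) n : ℤ)
      ≤ eps n i ℓ a l := by
  have hl0 : l ≠ 0 := by omega
  have hli : l ≠ i := by omega
  have hnlt : ¬ i < l := by omega
  obtain ⟨hqmem, hqmax⟩ := argmaxLow_spec (Icc i n) (Fminus n i a l)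
    ⟨i, by simp [hin]⟩
  set q := qMinus n i a l with hqdef
  have hqq : argmaxLow (Icc i n) (Fminus n i a l) = q := rfl
  rw [hqq] at hqmem hqmax
  obtain ⟨hq1, hqi⟩ := Finset.mem_Icc.mp hqmem
  have hF := hqmax n (Finset.mem_Icc.mpr ⟨hin, le_refl n⟩)
  unfold Fminus at hF
  have hFz : (∑ j ∈ Icc i n, (a l j : ℤ)) + ∑ j ∈ Icc n n, (a (l+1) j : ℤ)
      ≤ (∑ j ∈ Icc i q, (a l j : ℤ)) + ∑ j ∈ Icc q n, (a (l+1) j : ℤ) := by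
    exact_mod_cast hF
  rw [Finset.Icc_self, Finset.sum_singleton] at hFz
  have hsplit : (∑ j ∈ Icc i (q-1), (a (l+1) j : ℤ)) + ∑ j ∈ Icc q n, (a (l+1) j : ℤ)
      = ∑ j ∈ Icc i n, (a (l+1) j : ℤ) := by
    rw [show Icc i (q-1) = Ico i q by rw [← Finset.Ico_add_one_right_eq_Icc]; congr 1; omega,
        show Icc q n = Ico q (n+1) from (Finset.Ico_add_one_right_eq_Icc _ _).symm,
        show Icc i n = Ico i (n+1) from (Finset.Ico_add_one_right_eq_Icc _ _).symm]
    exact Finset.sum_Ico_consecutive _ (by omega) (by omega)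
  rw [eps, if_neg hl0, if_neg hli, if_neg hnlt]
  linarith

end Aux

/-- level bound, property (4) of perfectness:
`Σ_{j=0}^n ε_j(A) ≥ ℓ` for any `A ∈ B^{i,ℓ}`. -/
theorem stmt15 (n i ℓ : ℕ) (hi1 : 1 ≤ i) (hin : i ≤ n) (a : Mat)
    (ha : MemKR n i ℓ a) :
    (ℓ : ℤ) ≤ ∑ j ∈ range (n + 1), eps n i ℓ a j := by
  obtain ⟨hzero, -⟩ := ha
  -- main induction
  have key : ∀ m, m ≤ i - 1 →
      (∑ j ∈ Icc i n, (a (i - m) j : ℤ)) + ∑ l ∈ Icc (i - m + 1) i, (a l n : ℤ)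
        ≤ ∑ l ∈ Icc (i - m) n, eps n i ℓ a l := by
    intro m
    induction m with
    | zero =>
      intro _
      simp only [Nat.sub_zero]
      rw [show Icc (i+1) i = (∅ : Finset ℕ) from Finset.Icc_eq_empty (by omega),
        Finset.sum_empty, add_zero]
      apply Finset.sum_le_sum
      intro l hl
      obtain ⟨hil, hln⟩ := Finset.mem_Icc.mp hl
      rcases eq_or_lt_of_le hil with h | h
      · rw [eps, if_neg (by omega : l ≠ 0), if_pos h.symm, h]
      · exact eps_gt n i ℓ a hi1 l h
    | succ m ih =>
      intro hm
      have hk1 : 1 ≤ i - (m+1) := by omega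
      set k := i - (m+1) with hk
      have hk2 : k + 1 = i - m := by omega
      have hki : k < i := by omega
      have h1 : ∑ l ∈ Icc k n, eps n i ℓ a l
          = eps n i ℓ a k + ∑ l ∈ Icc (k+1) n, eps n i ℓ a l := by
        rw [show Icc k n = Ico k (n+1) from (Finset.Ico_add_one_right_eq_Icc _ _).symm,
          Finset.sum_eq_sum_Ico_succ_bot (by omega : k < n + 1),
          show Ico (k+1) (n+1) = Icc (k+1) n from Finset.Ico_add_one_right_eq_Icc _ _]
      have h2 : ∑ l ∈ Icc (k+1) i, (a l n : ℤ)
          = (a (k+1) n : ℤ) + ∑ l ∈ Icc (k+1+1) i, (a l n : ℤ) := by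
        rw [show Icc (k+1) i = Ico (k+1) (i+1) from (Finset.Ico_add_one_right_eq_Icc _ _).symm,
          Finset.sum_eq_sum_Ico_succ_bot (by omega : k + 1 < i + 1),
          show Ico (k+1+1) (i+1) = Icc (k+1+1) i from Finset.Ico_add_one_right_eq_Icc _ _]
      have hih := ih (by omega)
      rw [← hk2] at hih
      have heps := eps_lt n i ℓ a hin k hk1 hki
      rw [h1, h2]
      linarith
  have key1 := key (i - 1) (le_refl _)
  rw [show i - (i-1) = 1 by omega] at key1
  -- a j n = 0 for j > i
  have hzn : ∑ j ∈ Icc 2 n, (a j n : ℤ) = ∑ j ∈ Icc 2 i, (a j n : ℤ) := by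
    rw [show Icc 2 n = Ico 2 (n+1) from (Finset.Ico_add_one_right_eq_Icc _ _).symm,
      show Icc 2 i = Ico 2 (i+1) from (Finset.Ico_add_one_right_eq_Icc _ _).symm,
      ← Finset.sum_Ico_consecutive (fun j => (a j n : ℤ)) (by omega : 2 ≤ i + 1)
        (by omega : i + 1 ≤ n + 1)]
    have : ∑ j ∈ Ico (i+1) (n+1), (a j n : ℤ) = 0 := by
      apply Finset.sum_eq_zero
      intro j hj
      obtain ⟨hj1, hj2⟩ := Finset.mem_Ico.mp hj
      rw [hzero j n (by omega)]
      simp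
    rw [this, add_zero]
  have hsum : ∑ j ∈ range (n + 1), eps n i ℓ a j
      = eps n i ℓ a 0 + ∑ l ∈ Icc 1 n, eps n i ℓ a l := by
    rw [Finset.range_eq_Ico, Finset.sum_eq_sum_Ico_succ_bot (by omega : 0 < n + 1),
      show Ico 1 (n+1) = Icc 1 n from Finset.Ico_add_one_right_eq_Icc _ _]
  have heps0 : eps n i ℓ a 0
      = (ℓ : ℤ) - ∑ j ∈ Icc i n, (a 1 j : ℤ) - ∑ j ∈ Icc 2 n, (a j n : ℤ) := by
    rw [eps, if_pos rfl]
  rw [hsum, heps0, hzn]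
  linarith
end

section
/- (Ground-state path weight recursion) Define, for a tuple Λ = (a₀, a₁, …, a_n) of non-negative integers summing to ℓ, the element b^Λ ∈ B^{i,ℓ} whose (p,q)-entry is a_{(p+q) mod (n+1)} (indices in Z/(n+1), identifying a_{n+1} with a₀, etc.; explicitly the top-left entry is a_{i+1} and entries increase by 1 in the cyclic index along rows and down columns). Then φ_l(b^Λ) = a_l for all l = 0,…,n and ε_l(b^Λ) = a_{(l + i) mod (n+1)} for all l; consequently the sequence Λ_{k+1} = (ε_0(b^{Λ_k}), …, ε_n(b^{Λ_k})) satisfies Λ_k = cyclic shift of Λ₀ by k·i positions, and Λ_{k} = Λ₀ whenever (n+1) | k·i. -/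
open Finset

section helpers

lemma sum_shift (c : ℕ → ℕ) (m s a b : ℕ) :
    ∑ j ∈ Icc (a + s) (b + s), c (j % m) = ∑ j ∈ Icc a b, c ((j + s) % m) := by
  rw [← Finset.map_add_right_Icc, Finset.sum_map]
  rfl

lemma sum_mod_low (c : ℕ → ℕ) {m b : ℕ} (a : ℕ) (hb : b < m) :
    ∑ j ∈ Icc a b, c (j % m) = ∑ j ∈ Icc a b, c j := by
  refine Finset.sum_congr rfl fun j hj => ?_
  rw [Nat.mod_eq_of_lt (lt_of_le_of_lt (mem_Icc.mp hj).2 hb)]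

lemma sum_mod_high (c : ℕ → ℕ) {m a b : ℕ} (ha : m ≤ a) (hb1 : m ≤ b) (hb : b < 2 * m) :
    ∑ j ∈ Icc a b, c (j % m) = ∑ j ∈ Icc (a - m) (b - m), c j := by
  have h1 : a = (a - m) + m := by omega
  have h2 : b = (b - m) + m := by omega
  rw [show Icc a b = Icc ((a-m)+m) ((b-m)+m) by rw [← h1, ← h2], sum_shift]
  refine Finset.sum_congr rfl fun j hj => ?_
  have hj2 := (mem_Icc.mp hj).2
  rw [Nat.add_mod_right, Nat.mod_eq_of_lt (by omega)]

lemma sum_Icc_split (f : ℕ → ℕ) {a m b : ℕ} (h1 : a ≤ m + 1) (h2 : m ≤ b) :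
    ∑ j ∈ Icc a b, f j = ∑ j ∈ Icc a m, f j + ∑ j ∈ Icc (m + 1) b, f j := by
  rw [← Finset.Ico_add_one_right_eq_Icc, ← Finset.Ico_add_one_right_eq_Icc a m, ← Finset.Ico_add_one_right_eq_Icc (m+1) b,
    ← Finset.sum_Ico_consecutive _ h1 (by omega : m + 1 ≤ b + 1)]

lemma sum_Icc_head (f : ℕ → ℕ) {a b : ℕ} (h : a ≤ b) :
    ∑ j ∈ Icc a b, f j = f a + ∑ j ∈ Icc (a + 1) b, f j := by
  conv_lhs => rw [sum_Icc_split f (Nat.le_succ a) h]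
  rw [Finset.Icc_self, Finset.sum_singleton]

lemma rot (n : ℕ) (g : ℕ → ℕ) :
    ∑ j ∈ range (n + 1), g ((j + 1) % (n + 1)) = ∑ j ∈ range (n + 1), g j := by
  rw [Finset.sum_range_succ, Nat.mod_self, Finset.sum_range_succ']
  congr 1
  refine Finset.sum_congr rfl fun j hj => ?_
  rw [Nat.mod_eq_of_lt (by simpa using Nat.succ_lt_succ (Finset.mem_range.mp hj))]

lemma cyc (n t : ℕ) (c : ℕ → ℕ) :
    ∑ j ∈ range (n + 1), c ((j + t) % (n + 1)) = ∑ j ∈ range (n + 1), c j := by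
  induction t with
  | zero =>
    refine Finset.sum_congr rfl fun j hj => ?_
    rw [Nat.add_zero, Nat.mod_eq_of_lt (Finset.mem_range.mp hj)]
  | succ t ih =>
    have key : ∀ j, (j + (t + 1)) % (n + 1) = ((j + 1) % (n + 1) + t) % (n + 1) := by
      intro j
      conv_lhs => rw [show j + (t + 1) = (j + 1) + t by ring, Nat.add_mod]
      rw [Nat.add_mod ((j+1) % (n+1)) t, Nat.mod_mod_of_dvd _ (dvd_refl _)]
    simp_rw [key]
    rw [rot n (fun x => c ((x + t) % (n + 1))), ih]

lemma maximizers_const {S : Finset ℕ} {F : ℕ → ℕ}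
    (hc : ∀ q ∈ S, ∀ q' ∈ S, F q' = F q) : maximizers S F = S :=
  Finset.filter_true_of_mem fun q hq q' hq' => le_of_eq (hc q hq q' hq')

lemma argmaxLow_Icc {a b : ℕ} {F : ℕ → ℕ} (h : a ≤ b)
    (hc : ∀ q ∈ Icc a b, ∀ q' ∈ Icc a b, F q' = F q) : argmaxLow (Icc a b) F = a := by
  rw [argmaxLow, maximizers_const hc]
  have : (Icc a b).min = (a : WithTop ℕ) :=
    le_antisymm (Finset.min_le (mem_Icc.mpr ⟨le_refl a, h⟩))
      (Finset.le_min fun y hy => WithTop.coe_le_coe.mpr (mem_Icc.mp hy).1)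
  rw [this]; rfl

lemma argmaxHigh_Icc {a b : ℕ} {F : ℕ → ℕ} (h : a ≤ b)
    (hc : ∀ q ∈ Icc a b, ∀ q' ∈ Icc a b, F q' = F q) : argmaxHigh (Icc a b) F = b := by
  rw [argmaxHigh, maximizers_const hc]
  have : (Icc a b).max = (b : WithBot ℕ) :=
    le_antisymm (Finset.max_le fun y hy => WithBot.coe_le_coe.mpr (mem_Icc.mp hy).2)
      (Finset.le_max (mem_Icc.mpr ⟨h, le_refl b⟩))
  rw [this]; rfl

lemma bOf_eq {n i p q : ℕ} (c : ℕ → ℕ) (h1 : 1 ≤ p) (h2 : p ≤ i) (h3 : i ≤ q)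
    (h4 : q ≤ n) : bOf n i c p q = c ((p + q) % (n + 1)) := if_pos ⟨h1, h2, h3, h4⟩

lemma bOf_zero {n i p q : ℕ} (c : ℕ → ℕ) (h : ¬(1 ≤ p ∧ p ≤ i ∧ i ≤ q ∧ q ≤ n)) :
    bOf n i c p q = 0 := if_neg h

end helpers

section consts

variable {n i l : ℕ} (c : ℕ → ℕ)

lemma Gplus_const (hi1 : 1 ≤ i) (hil : i < l) (hln : l ≤ n) :
    ∀ q, 1 ≤ q → q ≤ i → Gplus i (bOf n i c) l q = Gplus i (bOf n i c) l 1 := by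
  intro q hq
  induction q, hq using Nat.le_induction with
  | base => intro _; rfl
  | succ q hq ih =>
    intro hqi
    have hq' : q ≤ i := by omega
    rw [← ih hq']
    have he : bOf n i c (q+1) (l-1) = bOf n i c q l := by
      rw [bOf_eq c (by omega) (by omega) (by omega) (by omega),
        bOf_eq c (by omega) (by omega) (by omega) (by omega),
        show q + 1 + (l - 1) = q + l by omega]
    unfold Gplus
    rw [Finset.sum_Icc_succ_top (by omega : 1 ≤ q + 1)]
    conv_rhs => rw [sum_Icc_head (fun j => bOf n i c j l) hq']
    simp only [he]
    ring

lemma Fminus_const (hil : 1 ≤ l) (hli : l < i) (hin : i ≤ n) :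
    ∀ q, i ≤ q → q ≤ n → Fminus n i (bOf n i c) l q = Fminus n i (bOf n i c) l i := by
  intro q hq
  induction q, hq using Nat.le_induction with
  | base => intro _; rfl
  | succ q hq ih =>
    intro hqn
    have hq' : q ≤ n := by omega
    rw [← ih hq']
    have he : bOf n i c l (q+1) = bOf n i c (l+1) q := by
      rw [bOf_eq c (by omega) (by omega) (by omega) (by omega),
        bOf_eq c (by omega) (by omega) (by omega) (by omega),
        show l + (q + 1) = l + 1 + q by omega]
    unfold Fminus
    rw [Finset.sum_Icc_succ_top (by omega : i ≤ q + 1)]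
    conv_rhs => rw [sum_Icc_head (fun j => bOf n i c (l+1) j) hq']
    simp only [he]
    ring

lemma pPlus_eq (hi1 : 1 ≤ i) (hil : i < l) (hln : l ≤ n) :
    pPlus i (bOf n i c) l = 1 :=
  argmaxLow_Icc hi1 fun q hq q' hq' => by
    rw [Gplus_const c hi1 hil hln q' (mem_Icc.mp hq').1 (mem_Icc.mp hq').2,
      Gplus_const c hi1 hil hln q (mem_Icc.mp hq).1 (mem_Icc.mp hq).2]

lemma qPlus_eq (hi1 : 1 ≤ i) (hil : i < l) (hln : l ≤ n) :
    qPlus i (bOf n i c) l = i :=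
  argmaxHigh_Icc hi1 fun q hq q' hq' => by
    rw [Gplus_const c hi1 hil hln q' (mem_Icc.mp hq').1 (mem_Icc.mp hq').2,
      Gplus_const c hi1 hil hln q (mem_Icc.mp hq).1 (mem_Icc.mp hq).2]

lemma pMinus_eq (hil : 1 ≤ l) (hli : l < i) (hin : i ≤ n) :
    pMinus n i (bOf n i c) l = n :=
  argmaxHigh_Icc hin fun q hq q' hq' => by
    rw [Fminus_const c hil hli hin q' (mem_Icc.mp hq').1 (mem_Icc.mp hq').2,
      Fminus_const c hil hli hin q (mem_Icc.mp hq).1 (mem_Icc.mp hq).2]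

lemma qMinus_eq (hil : 1 ≤ l) (hli : l < i) (hin : i ≤ n) :
    qMinus n i (bOf n i c) l = i :=
  argmaxLow_Icc hin fun q hq q' hq' => by
    rw [Fminus_const c hil hli hin q' (mem_Icc.mp hq').1 (mem_Icc.mp hq').2,
      Fminus_const c hil hli hin q (mem_Icc.mp hq).1 (mem_Icc.mp hq).2]

end consts

lemma key (n i ℓ : ℕ) (hi1 : 1 ≤ i) (hin : i ≤ n) (c : ℕ → ℕ)
    (hsum : ∑ j ∈ range (n + 1), c j = ℓ) (l : ℕ) (hl : l ≤ n) :
    phi n i ℓ (bOf n i c) l = c l ∧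
      eps n i ℓ (bOf n i c) l = c ((l + i) % (n + 1)) := by
  have hr : range (n + 1) = Icc 0 n := by rw [Finset.range_eq_Ico, Finset.Ico_add_one_right_eq_Icc]
  by_cases hl0 : l = 0
  · subst hl0
    constructor
    · simp only [phi, ite_true, eq_self_iff_true]
      rw [bOf_eq c le_rfl hi1 hin le_rfl, show 1 + n = n + 1 by omega, Nat.mod_self]
    · simp only [eps, ite_true, eq_self_iff_true]
      rw [show (0 + i) % (n + 1) = i by rw [Nat.zero_add, Nat.mod_eq_of_lt (by omega)]]
      have e1 : ∑ j ∈ Icc i n, bOf n i c 1 j = ∑ j ∈ Icc (i+1) n, c j + c 0 := by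
        have h0 : ∑ j ∈ Icc i n, bOf n i c 1 j = ∑ j ∈ Icc i n, c ((j + 1) % (n+1)) := by
          refine Finset.sum_congr rfl fun j hj => ?_
          rw [bOf_eq c le_rfl hi1 (mem_Icc.mp hj).1 (mem_Icc.mp hj).2, Nat.add_comm]
        rw [h0, ← sum_shift, Finset.sum_Icc_succ_top (by omega : i + 1 ≤ n + 1),
          Nat.mod_self, sum_mod_low c _ (by omega)]
      have e2 : ∑ j ∈ Icc 2 n, bOf n i c j n = ∑ j ∈ Icc 1 (i-1), c j := by
        rw [sum_Icc_split _ (by omega : 2 ≤ i + 1) hin]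
        have z : ∑ j ∈ Icc (i+1) n, bOf n i c j n = 0 :=
          Finset.sum_eq_zero fun j hj => bOf_zero c (by have := (mem_Icc.mp hj).1; omega)
        have h0 : ∑ j ∈ Icc 2 i, bOf n i c j n = ∑ j ∈ Icc 2 i, c ((j + n) % (n+1)) :=
          Finset.sum_congr rfl fun j hj =>
            bOf_eq c (by have := (mem_Icc.mp hj).1; omega) (mem_Icc.mp hj).2 hin le_rfl
        rw [z, h0, ← sum_shift, sum_mod_high c (by omega) (by omega) (by omega),
          show 2 + n - (n+1) = 1 by omega, show i + n - (n+1) = i - 1 by omega,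
          Nat.add_zero]
      have e3 : c 0 + (∑ j ∈ Icc 1 (i-1), c j + (c i + ∑ j ∈ Icc (i+1) n, c j)) = ℓ := by
        rw [← hsum, hr, sum_Icc_head c (by omega : 0 ≤ n)]
        congr 1
        rw [sum_Icc_split c (by omega : 0 + 1 ≤ (i-1) + 1) (by omega : i - 1 ≤ n),
          show i - 1 + 1 = i by omega, sum_Icc_head c hin]
      rw [← Nat.cast_sum, ← Nat.cast_sum, e1, e2]
      omega
  · by_cases hli : l = i
    · subst hli
      constructor
      · simp only [phi, if_neg hl0, ite_true, eq_self_iff_true]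
        have e1 : ∑ j ∈ Icc 1 (l-1), bOf n l c j l
            = ∑ j ∈ Icc 1 (l-1), c ((j + l) % (n+1)) :=
          Finset.sum_congr rfl fun j hj =>
            bOf_eq c (mem_Icc.mp hj).1 (by have := (mem_Icc.mp hj).2; omega) le_rfl hin
        have e2 : ∑ j ∈ Icc l n, bOf n l c l j
            = ∑ j ∈ Icc l n, c ((j + l) % (n+1)) := by
          refine Finset.sum_congr rfl fun j hj => ?_
          rw [bOf_eq c hi1 le_rfl (mem_Icc.mp hj).1 (mem_Icc.mp hj).2, Nat.add_comm]
        have e3 : ∑ j ∈ Icc 1 (l-1), c ((j + l) % (n+1))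
              + ∑ j ∈ Icc l n, c ((j + l) % (n+1)) + c l = ℓ := by
          have hs : ∑ j ∈ Icc 1 n, c ((j + l) % (n+1))
              = ∑ j ∈ Icc 1 (l-1), c ((j + l) % (n+1))
                + ∑ j ∈ Icc l n, c ((j + l) % (n+1)) := by
            rw [sum_Icc_split (fun j => c ((j + l) % (n+1)))
              (by omega : 1 ≤ (l-1) + 1) (by omega : l - 1 ≤ n),
              show l - 1 + 1 = l by omega]
          have hc2 : ∑ j ∈ range (n+1), c ((j + l) % (n+1)) = ℓ := by rw [cyc, hsum]
          rw [hr, sum_Icc_head _ (by omega : 0 ≤ n),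
            show (0 + l) % (n+1) = l by
              rw [Nat.zero_add, Nat.mod_eq_of_lt (by omega)], hs] at hc2
          omega
        rw [← Nat.cast_sum, ← Nat.cast_sum, e1, e2]
        omega
      · simp only [eps, if_neg hl0, ite_true, eq_self_iff_true]
        rw [bOf_eq c hi1 le_rfl le_rfl hin]
    · rcases Nat.lt_or_ge i l with hil | hge
      · constructor
        · simp only [phi, if_neg hl0, if_neg hli, if_pos hil, pPlus_eq c hi1 hil hl]
          rw [Finset.Icc_self, Finset.sum_singleton, show (1:ℕ) - 1 = 0 by rfl,
            Finset.Icc_eq_empty (by omega), Finset.sum_empty,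
            bOf_eq c le_rfl hi1 (by omega) (by omega), show 1 + (l-1) = l by omega,
            Nat.mod_eq_of_lt (by omega)]
          push_cast; ring
        · simp only [eps, if_neg hl0, if_neg hli, if_pos hil, qPlus_eq c hi1 hil hl]
          rw [Finset.Icc_self, Finset.sum_singleton,
            Finset.Icc_eq_empty (by omega : ¬ i + 1 ≤ i), Finset.sum_empty,
            bOf_eq c hi1 le_rfl hil.le hl, Nat.add_comm i l]
          push_cast; ring
      · have hli2 : l < i := by omega
        have hl1 : 1 ≤ l := by omega
        constructor
        · simp only [phi, if_neg hl0, if_neg hli, if_neg (by omega : ¬ i < l),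
            pMinus_eq c hl1 hli2 hin]
          rw [Finset.Icc_self, Finset.sum_singleton,
            Finset.Icc_eq_empty (by omega : ¬ n + 1 ≤ n), Finset.sum_empty,
            bOf_eq c (by omega) (by omega) hin le_rfl,
            show l + 1 + n = l + (n+1) by omega, Nat.add_mod_right,
            Nat.mod_eq_of_lt (by omega)]
          push_cast; ring
        · simp only [eps, if_neg hl0, if_neg hli, if_neg (by omega : ¬ i < l),
            qMinus_eq c hl1 hli2 hin]
          rw [Finset.Icc_self, Finset.sum_singleton,
            Finset.Icc_eq_empty (by omega : ¬ i ≤ i - 1), Finset.sum_empty,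
            bOf_eq c (by omega) (by omega) le_rfl hin]
          push_cast; ring


/-- for `b^Λ` with `(p,q)`-entry `a_{(p+q) mod (n+1)}` one has
`φ_l(b^Λ) = a_l` and `ε_l(b^Λ) = a_{(l+i) mod (n+1)}`; consequently the
ground-state sequence `Λ_{k+1} = (ε_0(b^{Λ_k}),…,ε_n(b^{Λ_k}))` is the cyclic
shift of `Λ₀` by `k·i`, and `Λ_k = Λ₀` whenever `(n+1) ∣ k·i`. -/
theorem stmt18 (n i ℓ : ℕ) (hi1 : 1 ≤ i) (hin : i ≤ n) (c : ℕ → ℕ)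
    (hsum : ∑ j ∈ range (n + 1), c j = ℓ) :
    (∀ l, l ≤ n → phi n i ℓ (bOf n i c) l = c l ∧
      eps n i ℓ (bOf n i c) l = c ((l + i) % (n + 1))) ∧
    ∀ Lam : ℕ → ℕ → ℕ, (∀ j, Lam 0 j = c j) →
      (∀ k j, Lam (k + 1) j = (eps n i ℓ (bOf n i (Lam k)) j).toNat) →
      (∀ k j, j ≤ n → Lam k j = c ((j + k * i) % (n + 1))) ∧
      ∀ k, (n + 1) ∣ k * i → ∀ j, j ≤ n → Lam k j = c j := by
  refine ⟨fun l hl => key n i ℓ hi1 hin c hsum l hl, fun Lam h0 hstep => ?_⟩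
  have main2 : ∀ k j, j ≤ n → Lam k j = c ((j + k * i) % (n + 1)) := by
    intro k
    induction k with
    | zero =>
      intro j hj
      rw [h0 j, show (j + 0 * i) % (n + 1) = j by
        rw [Nat.zero_mul, Nat.add_zero, Nat.mod_eq_of_lt (by omega)]]
    | succ k ih =>
      intro j hj
      set c' : ℕ → ℕ := fun j => c ((j + k * i) % (n + 1)) with hc'
      have hb : bOf n i (Lam k) = bOf n i c' := by
        funext p q
        simp only [bOf]
        by_cases h : 1 ≤ p ∧ p ≤ i ∧ i ≤ q ∧ q ≤ n
        · rw [if_pos h, if_pos h,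
            ih _ (Nat.lt_succ.mp (Nat.mod_lt _ (by omega)))]
        · rw [if_neg h, if_neg h]
      have hsum' : ∑ j ∈ range (n + 1), c' j = ℓ := by
        simp only [hc']
        exact (cyc n (k * i) c).trans hsum
      rw [hstep k j, hb, (key n i ℓ hi1 hin c' hsum' j hj).2]
      simp only [hc']
      rw [Int.toNat_natCast, Nat.mod_add_mod]
      congr 1
      ring
  refine ⟨main2, fun k hdvd j hj => ?_⟩
  obtain ⟨t, ht⟩ := hdvd
  rw [main2 k j hj, ht, Nat.add_mul_mod_self_left, Nat.mod_eq_of_lt (by omega)]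
end
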